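/- Let G be a topological group, g ∈ G, and suppose there exists a compact open subgroup L ≤ G such that the sequence ([L : L ∩ gⁿLg⁻ⁿ])_{n∈ℕ} is bounded. Then for every compact open subgroup K ≤ G, the sequence ([K : K ∩ gⁿKg⁻ⁿ])_{n∈ℕ} is bounded; indeed [K : K ∩ gⁿKg⁻ⁿ] ≤ [L : L ∩ gⁿLg⁻ⁿ] · [K : K ∩ L] · [L : K ∩ L] for all n. -/

import Mathlib

/-- The conjugate subgroup `gKg⁻¹`. -/
def conjSubgroup {G : Type*} [Group G] (g : G) (K : Subgroup G) : Subgroup G :=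
  Subgroup.map ((MulAut.conj g).toMonoidHom) K

lemma conjSubgroup_coe_image {G : Type*} [Group G] (c : G) (A : Subgroup G) :
    ((conjSubgroup c A : Subgroup G) : Set G) = (fun x => c * x * c⁻¹) '' (A : Set G) := by
  ext x
  simp [conjSubgroup, Subgroup.mem_map]

lemma conjSubgroup_coe_preimage {G : Type*} [Group G] (c : G) (A : Subgroup G) :
    ((conjSubgroup c A : Subgroup G) : Set G) = (fun x => c⁻¹ * x * c) ⁻¹' (A : Set G) := by
  ext x
  constructor
  · rintro ⟨a, ha, rfl⟩
    simpa [MulAut.conj_apply, mul_assoc] using ha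
  · intro hx
    exact ⟨c⁻¹ * x * c, hx, by simp [MulAut.conj_apply, mul_assoc]⟩

lemma conjSubgroup_isOpen {G : Type*} [Group G] [TopologicalSpace G] [IsTopologicalGroup G]
    (c : G) (A : Subgroup G) (hA : IsOpen (A : Set G)) :
    IsOpen ((conjSubgroup c A : Subgroup G) : Set G) := by
  rw [conjSubgroup_coe_preimage]
  exact hA.preimage (by fun_prop)

lemma conjSubgroup_isCompact {G : Type*} [Group G] [TopologicalSpace G] [IsTopologicalGroup G]
    (c : G) (A : Subgroup G) (hA : IsCompact (A : Set G)) :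
    IsCompact ((conjSubgroup c A : Subgroup G) : Set G) := by
  rw [conjSubgroup_coe_image]
  exact hA.image (by fun_prop)

lemma conjSubgroup_relindex {G : Type*} [Group G] (c : G) (A B : Subgroup G) :
    (conjSubgroup c A).relIndex (conjSubgroup c B) = A.relIndex B := by
  unfold conjSubgroup
  rw [← Subgroup.relIndex_comap,
    Subgroup.comap_map_eq_self_of_injective (MulAut.conj c).injective]

/-- If `H` is open and `K` is compact then `[K : H ∩ K]` is finite. -/
lemma relindex_ne_zero_of_isOpen_of_isCompact {G : Type*} [Group G] [TopologicalSpace G]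
    [IsTopologicalGroup G] (H K : Subgroup G) (hH : IsOpen (H : Set G))
    (hK : IsCompact (K : Set G)) : H.relIndex K ≠ 0 := by
  haveI : CompactSpace K := isCompact_iff_compactSpace.mp hK
  have hopen : IsOpen ((H.subgroupOf K : Subgroup K) : Set K) := by
    have : ((H.subgroupOf K : Subgroup K) : Set K) = (Subtype.val : K → G) ⁻¹' (H : Set G) := rfl
    rw [this]
    exact hH.preimage continuous_subtype_val
  haveI : Finite (K ⧸ H.subgroupOf K) := Subgroup.quotient_finite_of_isOpen _ hopen
  exact Subgroup.index_ne_zero_of_finite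

/-- If for some compact open subgroup `L` the indices `[L : L ∩ gⁿLg⁻ⁿ]` are bounded,
then they are bounded for every compact open subgroup `K`, with the explicit bound
`[K : K ∩ gⁿKg⁻ⁿ] ≤ [L : L ∩ gⁿLg⁻ⁿ] · [K : K ∩ L] · [L : K ∩ L]`. -/
theorem bounded_conj_indices_independent_of_subgroup
    {G : Type*} [Group G] [TopologicalSpace G] [IsTopologicalGroup G]
    (g : G)
    (L : Subgroup G) (hLc : IsCompact (L : Set G)) (hLo : IsOpen (L : Set G))
    (hbdd : ∃ C : ℕ, ∀ n : ℕ, (conjSubgroup (g ^ n) L).relIndex L ≤ C)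
    (K : Subgroup G) (hKc : IsCompact (K : Set G)) (hKo : IsOpen (K : Set G)) :
    (∀ n : ℕ, (conjSubgroup (g ^ n) K).relIndex K ≤
        (conjSubgroup (g ^ n) L).relIndex L * L.relIndex K * K.relIndex L) ∧
      ∃ C : ℕ, ∀ n : ℕ, (conjSubgroup (g ^ n) K).relIndex K ≤ C := by
  have key : ∀ n : ℕ, (conjSubgroup (g ^ n) K).relIndex K ≤
      (conjSubgroup (g ^ n) L).relIndex L * L.relIndex K * K.relIndex L := by
    intro n
    set c := g ^ n with hc
    set K' := conjSubgroup c K with hK'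
    set L' := conjSubgroup c L with hL'
    have hK'o : IsOpen (K' : Set G) := conjSubgroup_isOpen c K hKo
    have hK'c : IsCompact (K' : Set G) := conjSubgroup_isCompact c K hKc
    have hL'o : IsOpen (L' : Set G) := conjSubgroup_isOpen c L hLo
    have hL'c : IsCompact (L' : Set G) := conjSubgroup_isCompact c L hLc
    have nzK'L' : K'.relIndex L' ≠ 0 :=
      relindex_ne_zero_of_isOpen_of_isCompact _ _ hK'o hL'c
    have nzL'L : L'.relIndex L ≠ 0 :=
      relindex_ne_zero_of_isOpen_of_isCompact _ _ hL'o hLc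
    have nzK'K : K'.relIndex K ≠ 0 :=
      relindex_ne_zero_of_isOpen_of_isCompact _ _ hK'o hKc
    have nzL'K : L'.relIndex K ≠ 0 :=
      relindex_ne_zero_of_isOpen_of_isCompact _ _ hL'o hKc
    have nzLK : L.relIndex K ≠ 0 :=
      relindex_ne_zero_of_isOpen_of_isCompact _ _ hLo hKc
    have nzK'L'K : (K' ⊓ L').relIndex K ≠ 0 :=
      Subgroup.relIndex_inf_ne_zero nzK'K nzL'K
    have nzL'LK : (L' ⊓ L).relIndex K ≠ 0 :=
      Subgroup.relIndex_inf_ne_zero nzL'K nzLK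
    -- Step 1 : [K : K'] ≤ [K : K' ⊓ L']
    have step1 : K'.relIndex K ≤ (K' ⊓ L').relIndex K :=
      Subgroup.relIndex_le_of_le_left inf_le_left nzK'L'K
    -- Step 2 : [K : K' ⊓ L'] = [L' ⊓ K : K'] * [K : L']
    have step2 : (K' ⊓ L').relIndex K = K'.relIndex (L' ⊓ K) * L'.relIndex K :=
      (Subgroup.relIndex_inf_mul_relIndex K' L' K).symm
    -- [L' ⊓ K : K'] ≤ [L' : K'] = [L : K]
    have step3 : K'.relIndex (L' ⊓ K) ≤ K.relIndex L := by
      calc K'.relIndex (L' ⊓ K) ≤ K'.relIndex L' :=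
            Subgroup.relIndex_le_of_le_right inf_le_left nzK'L'
        _ = K.relIndex L := conjSubgroup_relindex c K L
    -- [K : L'] ≤ [K : L' ⊓ L] = [L ⊓ K : L'] * [K : L] ≤ [L : L'] * [K : L]
    have step4 : L'.relIndex K ≤ L'.relIndex L * L.relIndex K := by
      calc L'.relIndex K ≤ (L' ⊓ L).relIndex K :=
            Subgroup.relIndex_le_of_le_left inf_le_left nzL'LK
        _ = L'.relIndex (L ⊓ K) * L.relIndex K :=
            (Subgroup.relIndex_inf_mul_relIndex L' L K).symm
        _ ≤ L'.relIndex L * L.relIndex K :=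
            Nat.mul_le_mul_right _
              (Subgroup.relIndex_le_of_le_right inf_le_left nzL'L)
    calc K'.relIndex K ≤ (K' ⊓ L').relIndex K := step1
      _ = K'.relIndex (L' ⊓ K) * L'.relIndex K := step2
      _ ≤ K.relIndex L * (L'.relIndex L * L.relIndex K) :=
          Nat.mul_le_mul step3 step4
      _ = L'.relIndex L * L.relIndex K * K.relIndex L := by ring
  refine ⟨key, ?_⟩
  obtain ⟨C, hC⟩ := hbdd
  refine ⟨C * L.relIndex K * K.relIndex L, fun n => (key n).trans ?_⟩
  exact Nat.mul_le_mul (Nat.mul_le_mul (hC n) le_rfl) le_rfl
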